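/- Let Q be a quiver and θ ∈ ℤ^{Q0} a weight such that the pair (Q,θ) is tight. Then the dimension of the affine span of ∇(Q,θ) equals χ(Q) = |Q1| − |Q0| + c(Q), where c(Q) is the number of connected components of the underlying undirected graph of Q. -/

import Mathlib

/-- The flow map of a quiver with arrow set `A`, vertex set `V`, source map `s`
and target map `t`. -/
def flowMap {V A : Type} [Fintype A] [DecidableEq V] (s t : A → V) (x : A → ℝ) (v : V) : ℝ :=
  (∑ a : A, if t a = v then x a else 0) - (∑ a : A, if s a = v then x a else 0)

/-- The quiver polyhedron `∇(Q,θ)`. -/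
def quiverPolyhedron {V A : Type} [Fintype A] [DecidableEq V] (s t : A → V) (θ : V → ℤ) :
    Set (A → ℝ) :=
  {x | (∀ a, 0 ≤ x a) ∧ ∀ v, flowMap s t x v = (θ v : ℝ)}

/-- A point of `ℝ^A` is a lattice point if all its coordinates are integers. -/
def IsLatticePt {A : Type} (x : A → ℝ) : Prop := ∀ a, ∃ z : ℤ, x a = (z : ℝ)

/-- Integral-affine equivalence of lattice polyhedra. -/
def IntegralAffinelyEquivalent {A B : Type}
    (P : Set (A → ℝ)) (Q : Set (B → ℝ)) : Prop :=
  ∃ (φ : (A → ℝ) →ᵃ[ℝ] (B → ℝ)) (ψ : (B → ℝ) →ᵃ[ℝ] (A → ℝ)),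
    (∀ x ∈ affineSpan ℝ P, ψ (φ x) = x) ∧
    (∀ y ∈ affineSpan ℝ Q, φ (ψ y) = y) ∧
    φ '' (affineSpan ℝ P : Set (A → ℝ)) = (affineSpan ℝ Q : Set (B → ℝ)) ∧
    φ '' ((affineSpan ℝ P : Set (A → ℝ)) ∩ {x | IsLatticePt x}) =
      (affineSpan ℝ Q : Set (B → ℝ)) ∩ {y | IsLatticePt y} ∧
    φ '' P = Q

/-- The quiver has an oriented cycle. -/
def HasOrientedCycle {V A : Type} (s t : A → V) : Prop :=
  ∃ (n : ℕ) (f : Fin (n + 1) → A), ∀ i : Fin (n + 1), t (f i) = s (f (i + 1))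

/-- The arrow `a` is removable for `(Q,θ)`. -/
def Removable {V A : Type} [Fintype A] [DecidableEq V] [DecidableEq A]
    (s t : A → V) (θ : V → ℤ) (a : A) : Prop :=
  IntegralAffinelyEquivalent (quiverPolyhedron s t θ)
    (quiverPolyhedron (fun b : {b : A // b ≠ a} => s b.1) (fun b => t b.1) θ)

/-- The non-loop arrow `a` is contractable for `(Q,θ)`. -/
def Contractable {V A : Type} [Fintype A] [DecidableEq V] [DecidableEq A]
    (s t : A → V) (θ : V → ℤ) (a : A) (h : s a ≠ t a) : Prop :=
  IntegralAffinelyEquivalent (quiverPolyhedron s t θ)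
    (quiverPolyhedron
      (fun b : {b : A // b ≠ a} =>
        if hb : s b.1 = s a then (⟨t a, Ne.symm h⟩ : {v : V // v ≠ s a}) else ⟨s b.1, hb⟩)
      (fun b : {b : A // b ≠ a} =>
        if hb : t b.1 = s a then (⟨t a, Ne.symm h⟩ : {v : V // v ≠ s a}) else ⟨t b.1, hb⟩)
      (fun v : {v : V // v ≠ s a} => if v.1 = t a then θ (s a) + θ (t a) else θ v.1))

/-- The pair `(Q,θ)` is tight. -/
def Tight {V A : Type} [Fintype A] [DecidableEq V] [DecidableEq A]
    (s t : A → V) (θ : V → ℤ) : Prop :=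
  (quiverPolyhedron s t θ).Nonempty ∧
  (∀ a : A, ¬ Removable s t θ a) ∧
  ∀ (a : A) (h : s a ≠ t a), ¬ Contractable s t θ a h

/-- The underlying undirected (simple) graph of a quiver: two distinct vertices are
adjacent iff some arrow joins them. -/
def underlyingGraph {V A : Type} (s t : A → V) : SimpleGraph V :=
  SimpleGraph.fromRel (fun v w => ∃ a : A, s a = v ∧ t a = w)

set_option linter.unusedSectionVars false

section Lin
variable {V A : Type} [Fintype V] [Fintype A] [DecidableEq V] [DecidableEq A]
  (s t : A → V)

noncomputable def flowLin : (A → ℝ) →ₗ[ℝ] (V → ℝ) where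
  toFun x := flowMap s t x
  map_add' x y := by
    funext v
    simp only [flowMap, Pi.add_apply]
    rw [show (∑ a : A, if t a = v then x a + y a else 0)
        = (∑ a : A, if t a = v then x a else 0) + ∑ a : A, if t a = v then y a else 0 by
      rw [← Finset.sum_add_distrib]; exact Finset.sum_congr rfl fun a _ => by split <;> simp]
    rw [show (∑ a : A, if s a = v then x a + y a else 0)
        = (∑ a : A, if s a = v then x a else 0) + ∑ a : A, if s a = v then y a else 0 by
      rw [← Finset.sum_add_distrib]; exact Finset.sum_congr rfl fun a _ => by split <;> simp]
    ring
  map_smul' c x := by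
    funext v
    simp only [flowMap, Pi.smul_apply, RingHom.id_apply, smul_eq_mul]
    rw [show (∑ a : A, if t a = v then c * x a else 0)
        = c * ∑ a : A, if t a = v then x a else 0 by
      rw [Finset.mul_sum]; exact Finset.sum_congr rfl fun a _ => by split <;> simp]
    rw [show (∑ a : A, if s a = v then c * x a else 0)
        = c * ∑ a : A, if s a = v then x a else 0 by
      rw [Finset.mul_sum]; exact Finset.sum_congr rfl fun a _ => by split <;> simp]
    ring

lemma flowLin_single (a : A) (c : ℝ) :
    flowLin s t (Pi.single a c) = Pi.single (t a) c - Pi.single (s a) c := by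
  funext v
  simp only [flowLin, LinearMap.coe_mk, AddHom.coe_mk, flowMap, Pi.sub_apply]
  rw [show (∑ b : A, if t b = v then Pi.single a c b else 0) = if t a = v then c else 0 by
    rw [Finset.sum_eq_single a]
    · simp
    · intro b _ hb; simp [Pi.single_eq_of_ne hb]
    · simp]
  rw [show (∑ b : A, if s b = v then Pi.single a c b else 0) = if s a = v then c else 0 by
    rw [Finset.sum_eq_single a]
    · simp
    · intro b _ hb; simp [Pi.single_eq_of_ne hb]
    · simp]
  simp [Pi.single_apply, eq_comm]

lemma comp_eq_arrow (a : A) :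
    (underlyingGraph s t).connectedComponentMk (s a)
      = (underlyingGraph s t).connectedComponentMk (t a) := by
  rcases eq_or_ne (s a) (t a) with h | h
  · rw [h]
  · exact SimpleGraph.ConnectedComponent.sound
      (SimpleGraph.Adj.reachable (by simp [underlyingGraph, SimpleGraph.fromRel_adj, h]; exact Or.inl ⟨a, rfl, rfl⟩))

end Lin

section G
variable {V A : Type} [Fintype V] [Fintype A] [DecidableEq V] [DecidableEq A]
  (s t : A → V)

open Classical in
/-- Sum over connected components. -/
noncomputable def compSum : (V → ℝ) →ₗ[ℝ] ((underlyingGraph s t).ConnectedComponent → ℝ) where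
  toFun y c := ∑ v : V, if (underlyingGraph s t).connectedComponentMk v = c then y v else 0
  map_add' x y := by
    funext c
    simp only [Pi.add_apply]
    rw [← Finset.sum_add_distrib]
    exact Finset.sum_congr rfl fun v _ => by split <;> simp
  map_smul' r x := by
    funext c
    simp only [Pi.smul_apply, RingHom.id_apply, smul_eq_mul]
    rw [Finset.mul_sum]
    exact Finset.sum_congr rfl fun v _ => by split <;> simp

open Classical in
lemma compSum_apply (y : V → ℝ) (c : (underlyingGraph s t).ConnectedComponent) :
    compSum s t y c
      = ∑ v : V, if (underlyingGraph s t).connectedComponentMk v = c then y v else 0 := rfl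

lemma compSum_surjective : Function.Surjective (compSum s t) := by
  classical
  intro z
  choose rep hrep using fun c : (underlyingGraph s t).ConnectedComponent => Quot.exists_rep c
  refine ⟨fun v => if v = rep ((underlyingGraph s t).connectedComponentMk v)
      then z ((underlyingGraph s t).connectedComponentMk v) else 0, ?_⟩
  funext c
  rw [compSum_apply]
  rw [Finset.sum_eq_single (rep c)]
  · have h1 : (underlyingGraph s t).connectedComponentMk (rep c) = c := hrep c
    simp [h1]
  · intro v _ hv
    by_cases h : (underlyingGraph s t).connectedComponentMk v = c
    · simp [h, hv]
    · simp [h]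
  · simp

lemma compSum_flowLin (x : A → ℝ) : compSum s t (flowLin s t x) = 0 := by
  classical
  funext c
  rw [compSum_apply]
  simp only [Pi.zero_apply]
  have key : ∀ (u : A → V),
      (∑ v : V, if (underlyingGraph s t).connectedComponentMk v = c
          then (∑ a : A, if u a = v then x a else 0) else 0)
        = ∑ a : A, if (underlyingGraph s t).connectedComponentMk (u a) = c then x a else 0 := by
    intro u
    have : ∀ v : V, (if (underlyingGraph s t).connectedComponentMk v = c
          then (∑ a : A, if u a = v then x a else 0) else 0)
        = ∑ a : A, if u a = v then
            (if (underlyingGraph s t).connectedComponentMk (u a) = c then x a else 0) else 0 := by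
      intro v
      split_ifs with h
      · exact Finset.sum_congr rfl fun a _ => by
          split_ifs with h2 h3 <;> simp_all
      · rw [Finset.sum_eq_zero]
        intro a _
        split_ifs with h2 h3 <;> simp_all
    rw [Finset.sum_congr rfl fun v _ => this v, Finset.sum_comm]
    exact Finset.sum_congr rfl fun a _ => by
      rw [Fintype.sum_ite_eq (u a)
        (fun v => if (underlyingGraph s t).connectedComponentMk (u a) = c then x a else 0)]
  have hf : ∀ v, flowLin s t x v
      = (∑ a : A, if t a = v then x a else 0) - (∑ a : A, if s a = v then x a else 0) := fun v => rfl
  calc (∑ v : V, if (underlyingGraph s t).connectedComponentMk v = c then flowLin s t x v else 0)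
      = (∑ v : V, if (underlyingGraph s t).connectedComponentMk v = c
          then (∑ a : A, if t a = v then x a else 0) else 0)
        - (∑ v : V, if (underlyingGraph s t).connectedComponentMk v = c
          then (∑ a : A, if s a = v then x a else 0) else 0) := by
        rw [← Finset.sum_sub_distrib]
        exact Finset.sum_congr rfl fun v _ => by rw [hf]; split <;> simp
    _ = 0 := by
        rw [key, key, ← Finset.sum_sub_distrib]
        refine Finset.sum_eq_zero fun a _ => ?_
        rw [comp_eq_arrow s t a]
        ring
end G

section Ker
variable {V A : Type} [Fintype V] [Fintype A] [DecidableEq V] [DecidableEq A]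
  (s t : A → V)

lemma single_sub_mem_range_of_adj {v w : V} (h : (underlyingGraph s t).Adj v w) :
    (Pi.single w 1 - Pi.single v 1 : V → ℝ) ∈ LinearMap.range (flowLin s t) := by
  rw [underlyingGraph, SimpleGraph.fromRel_adj] at h
  rcases h.2 with ⟨a, ha1, ha2⟩ | ⟨a, ha1, ha2⟩
  · exact ⟨Pi.single a 1, by rw [flowLin_single, ha1, ha2]⟩
  · exact ⟨Pi.single a (-1), by rw [flowLin_single, ha1, ha2]; funext u; simp [Pi.single_apply]; split_ifs <;> ring⟩

lemma single_sub_mem_range_of_reachable {v w : V}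
    (h : (underlyingGraph s t).Reachable v w) :
    (Pi.single w 1 - Pi.single v 1 : V → ℝ) ∈ LinearMap.range (flowLin s t) := by
  obtain ⟨p⟩ := h
  induction p with
  | nil => simp
  | @cons v u w hadj p ih =>
    have h1 := single_sub_mem_range_of_adj s t hadj
    have : (Pi.single w 1 - Pi.single v 1 : V → ℝ)
        = (Pi.single w 1 - Pi.single u 1) + (Pi.single u 1 - Pi.single v 1) := by abel
    rw [this]
    exact Submodule.add_mem _ ih h1

lemma ker_compSum_le_range : LinearMap.ker (compSum s t) ≤ LinearMap.range (flowLin s t) := by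
  classical
  intro y hy
  choose rep hrep using fun c : (underlyingGraph s t).ConnectedComponent => Quot.exists_rep c
  have hrep' : ∀ c, (underlyingGraph s t).connectedComponentMk (rep c) = c := hrep
  have hy0 : compSum s t y = 0 := hy
  have decomp : y = ∑ v : V, y v •
      ((Pi.single v 1 - Pi.single (rep ((underlyingGraph s t).connectedComponentMk v)) 1 : V → ℝ)) := by
    have e1 : (∑ v : V, y v • (Pi.single v 1 : V → ℝ)) = y := by
      funext w
      rw [Finset.sum_apply]
      rw [Finset.sum_eq_single w] <;> simp +contextual [Pi.single_apply]
    have e2 : (∑ v : V, y v •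
        (Pi.single (rep ((underlyingGraph s t).connectedComponentMk v)) 1 : V → ℝ)) = 0 := by
      have grp : ∀ v : V, y v •
          (Pi.single (rep ((underlyingGraph s t).connectedComponentMk v)) 1 : V → ℝ)
          = ∑ c : (underlyingGraph s t).ConnectedComponent,
              if (underlyingGraph s t).connectedComponentMk v = c
                then y v • (Pi.single (rep c) 1 : V → ℝ) else 0 := by
        intro v
        rw [Fintype.sum_ite_eq ((underlyingGraph s t).connectedComponentMk v)]
      rw [Finset.sum_congr rfl fun v _ => grp v, Finset.sum_comm]
      refine Finset.sum_eq_zero fun c _ => ?_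
      have : (∑ v : V, if (underlyingGraph s t).connectedComponentMk v = c
            then y v • (Pi.single (rep c) 1 : V → ℝ) else 0)
          = (∑ v : V, if (underlyingGraph s t).connectedComponentMk v = c then y v else 0)
            • (Pi.single (rep c) 1 : V → ℝ) := by
        rw [Finset.sum_smul]
        exact Finset.sum_congr rfl fun v _ => by split <;> simp
      rw [this]
      have : (∑ v : V, if (underlyingGraph s t).connectedComponentMk v = c then y v else 0)
          = compSum s t y c := (compSum_apply s t y c).symm
      rw [this, hy0]
      simp
    calc y = (∑ v : V, y v • (Pi.single v 1 : V → ℝ))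
          - ∑ v : V, y v •
            (Pi.single (rep ((underlyingGraph s t).connectedComponentMk v)) 1 : V → ℝ) := by
          rw [e1, e2]; abel
      _ = _ := by
          rw [← Finset.sum_sub_distrib]
          exact Finset.sum_congr rfl fun v _ => by rw [← smul_sub]
  rw [decomp]
  refine Submodule.sum_mem _ fun v _ => Submodule.smul_mem _ _ ?_
  refine single_sub_mem_range_of_reachable s t ?_
  exact SimpleGraph.ConnectedComponent.exact (by rw [hrep'])

lemma range_flowLin_eq : LinearMap.range (flowLin s t) = LinearMap.ker (compSum s t) := by
  refine le_antisymm ?_ (ker_compSum_le_range s t)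
  rintro _ ⟨x, rfl⟩
  exact compSum_flowLin s t x

end Ker

section Rank
variable {V A : Type} [Fintype V] [Fintype A] [DecidableEq V] [DecidableEq A]
  (s t : A → V)

lemma finrank_ker_flowLin :
    Module.finrank ℝ (LinearMap.ker (flowLin s t)) + Fintype.card V
      = Fintype.card A + Nat.card (underlyingGraph s t).ConnectedComponent := by
  classical
  letI : Fintype (underlyingGraph s t).ConnectedComponent := Fintype.ofFinite _
  have hG : Module.finrank ℝ (LinearMap.range (compSum s t))
      = Nat.card (underlyingGraph s t).ConnectedComponent := by
    rw [LinearMap.range_eq_top.mpr (compSum_surjective s t)]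
    rw [finrank_top, Module.finrank_pi, Nat.card_eq_fintype_card]
  have rn1 := LinearMap.finrank_range_add_finrank_ker (flowLin s t)
  have rn2 := LinearMap.finrank_range_add_finrank_ker (compSum s t)
  rw [Module.finrank_pi] at rn1 rn2
  rw [range_flowLin_eq] at rn1
  omega

end Rank


lemma sub_sum_eq {V A : Type} [Fintype A] [DecidableEq V] [DecidableEq A]
    (a : A) (u : A → V) (x : A → ℝ) (hx : x a = 0) (v : V) :
    (∑ b : {b : A // b ≠ a}, if u b.1 = v then x b.1 else 0)
      = ∑ b : A, if u b = v then x b else 0 := by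
  classical
  rw [← Finset.sum_subtype (Finset.univ.erase a)
      (fun b => by simp [Finset.mem_erase]) (fun b => if u b = v then x b else 0)]
  rw [← Finset.add_sum_erase Finset.univ (fun b => if u b = v then x b else 0)
      (Finset.mem_univ a)]
  rw [hx]
  simp

lemma flowMap_restrict {V A : Type} [Fintype A] [DecidableEq V] [DecidableEq A]
    (s t : A → V) (a : A) (x : A → ℝ) (hx : x a = 0) (v : V) :
    flowMap (fun b : {b : A // b ≠ a} => s b.1) (fun b => t b.1) (fun b => x b.1) v
      = flowMap s t x v := by
  unfold flowMap
  rw [sub_sum_eq a t x hx v, sub_sum_eq a s x hx v]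

/-- extension by zero as a linear map -/
noncomputable def extZero {A : Type} [DecidableEq A] (a : A) :
    ({b : A // b ≠ a} → ℝ) →ₗ[ℝ] (A → ℝ) where
  toFun y b := if h : b = a then 0 else y ⟨b, h⟩
  map_add' x y := by funext b; by_cases h : b = a <;> simp [h]
  map_smul' c x := by funext b; by_cases h : b = a <;> simp [h]

section Rem
variable {V A : Type} [Fintype V] [Fintype A] [DecidableEq V] [DecidableEq A]
  (s t : A → V) (θ : V → ℤ) (a : A)

lemma removable_of_zero (hzero : ∀ x ∈ quiverPolyhedron s t θ, x a = 0) :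
    Removable s t θ a := by
  classical
  set P := quiverPolyhedron s t θ with hP
  set Q := quiverPolyhedron (fun b : {b : A // b ≠ a} => s b.1) (fun b => t b.1) θ with hQ
  set φ : (A → ℝ) →ᵃ[ℝ] ({b : A // b ≠ a} → ℝ) :=
    (LinearMap.funLeft ℝ ℝ (fun b : {b : A // b ≠ a} => b.1)).toAffineMap with hφ
  set ψ : ({b : A // b ≠ a} → ℝ) →ᵃ[ℝ] (A → ℝ) := (extZero a).toAffineMap with hψ
  have hφ_app : ∀ (x : A → ℝ) (b : {b : A // b ≠ a}), φ x b = x b.1 := fun _ _ => rfl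
  have hψ_app : ∀ (y : {b : A // b ≠ a} → ℝ) (b : A),
      ψ y b = if h : b = a then 0 else y ⟨b, h⟩ := fun _ _ => rfl
  have hφψ : ∀ y, φ (ψ y) = y := by
    intro y; funext b
    rw [hφ_app, hψ_app]
    simp [b.2]
  have hψφ : ∀ x : A → ℝ, x a = 0 → ψ (φ x) = x := by
    intro x hx; funext b
    rw [hψ_app]
    split_ifs with h
    · rw [h, hx]
    · rfl
  have hspan0 : ∀ x : A → ℝ, x ∈ affineSpan ℝ P → x a = 0 := by
    have hle : affineSpan ℝ P ≤ (LinearMap.ker (LinearMap.proj a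
        (φ := fun _ : A => ℝ) (R := ℝ))).toAffineSubspace := by
      refine affineSpan_le.mpr ?_
      intro x hx
      exact hzero x hx
    intro x hx
    exact (Submodule.mem_toAffineSubspace).mp (hle hx)
  have himg : φ '' P = Q := by
    ext y
    constructor
    · rintro ⟨x, hx, rfl⟩
      refine ⟨fun b => hx.1 b.1, fun v => ?_⟩
      exact (flowMap_restrict s t a x (hzero x hx) v).trans (hx.2 v)
    · intro hy
      refine ⟨ψ y, ⟨?_, ?_⟩, hφψ y⟩
      · intro b
        rw [hψ_app]
        split_ifs with h
        · exact le_refl 0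
        · exact hy.1 ⟨b, h⟩
      · intro v
        have h0 : (ψ y) a = 0 := by rw [hψ_app]; simp
        have e : (fun b : {b : A // b ≠ a} => (ψ y) b.1) = y := by
          funext b; rw [hψ_app]; simp [b.2]
        calc flowMap s t (ψ y) v
            = flowMap (fun b : {b : A // b ≠ a} => s b.1) (fun b => t b.1)
                (fun b => (ψ y) b.1) v := (flowMap_restrict s t a (ψ y) h0 v).symm
          _ = (θ v : ℝ) := by rw [e]; exact hy.2 v
  have hspanimg : φ '' (affineSpan ℝ P : Set (A → ℝ)) = (affineSpan ℝ Q : Set _) := by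
    rw [← AffineSubspace.coe_map, AffineSubspace.map_span, himg]
  refine ⟨φ, ψ, fun x hx => hψφ x (hspan0 x hx), fun y _ => hφψ y, hspanimg, ?_, himg⟩
  ext y
  constructor
  · rintro ⟨x, ⟨hx1, hx2⟩, rfl⟩
    refine ⟨hspanimg ▸ Set.mem_image_of_mem φ hx1, fun b => hx2 b.1⟩
  · rintro ⟨hy1, hy2⟩
    obtain ⟨x, hx, rfl⟩ := hspanimg.symm ▸ hy1
    refine ⟨x, ⟨hx, fun b => ?_⟩, rfl⟩
    by_cases h : b = a
    · subst h; exact ⟨0, by rw [hspan0 x hx]; simp⟩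
    · obtain ⟨z, hz⟩ := hy2 ⟨b, h⟩
      exact ⟨z, hz⟩
end Rem

section Main
variable {V A : Type} [Fintype V] [Fintype A] [DecidableEq V] [DecidableEq A]
  (s t : A → V) (θ : V → ℤ)

lemma flowMap_eq_flowLin (x : A → ℝ) : flowMap s t x = flowLin s t x := rfl

lemma exists_interior_point (hne : (quiverPolyhedron s t θ).Nonempty)
    (hpos : ∀ a : A, ∃ x ∈ quiverPolyhedron s t θ, 0 < x a) :
    ∃ x ∈ quiverPolyhedron s t θ, ∀ a, 0 < x a := by
  classical
  rcases isEmpty_or_nonempty A with hA | hA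
  · obtain ⟨p, hp⟩ := hne
    exact ⟨p, hp, fun a => isEmptyElim a⟩
  · choose w hw hwpos using hpos
    set n : ℝ := (Fintype.card A : ℝ) with hn
    have hnpos : 0 < n := by
      rw [hn]
      exact_mod_cast Fintype.card_pos
    refine ⟨n⁻¹ • ∑ a : A, w a, ⟨?_, ?_⟩, ?_⟩
    · intro b
      have : 0 ≤ ∑ a : A, w a b := Finset.sum_nonneg fun a _ => (hw a).1 b
      have h2 : (n⁻¹ • ∑ a : A, w a) b = n⁻¹ * ∑ a : A, (w a) b := by
        simp [Finset.sum_apply]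
      rw [h2]
      positivity
    · intro v
      rw [flowMap_eq_flowLin, map_smul, map_sum]
      have : ∀ a : A, flowLin s t (w a) v = (θ v : ℝ) := fun a => (hw a).2 v
      simp only [Pi.smul_apply, Finset.sum_apply, smul_eq_mul]
      rw [Finset.sum_congr rfl fun a _ => this a, Finset.sum_const, Finset.card_univ,
        nsmul_eq_mul]
      field_simp
      rw [hn]
    · intro b
      have h2 : (n⁻¹ • ∑ a : A, w a) b = n⁻¹ * ∑ a : A, (w a) b := by
        simp [Finset.sum_apply]
      rw [h2]
      have hb : 0 < (w b) b := hwpos b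
      have hsum : 0 < ∑ a : A, (w a) b :=
        Finset.sum_pos' (fun a _ => (hw a).1 b) ⟨b, Finset.mem_univ b, hb⟩
      positivity

lemma direction_eq_ker (x : A → ℝ) (hx : x ∈ quiverPolyhedron s t θ)
    (hxpos : ∀ a, 0 < x a) :
    (affineSpan ℝ (quiverPolyhedron s t θ)).direction = LinearMap.ker (flowLin s t) := by
  classical
  set P := quiverPolyhedron s t θ with hP
  have hker : ∀ y ∈ P, ∀ z ∈ P, flowLin s t (y - z) = 0 := by
    intro y hy z hz
    rw [map_sub]
    funext v
    have h1 : flowLin s t y v = (θ v : ℝ) := hy.2 v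
    have h2 : flowLin s t z v = (θ v : ℝ) := hz.2 v
    simp [h1, h2]
  refine le_antisymm ?_ ?_
  · have hle : affineSpan ℝ P ≤ AffineSubspace.mk' x (LinearMap.ker (flowLin s t)) := by
      refine affineSpan_le.mpr ?_
      intro y hy
      rw [SetLike.mem_coe, AffineSubspace.mem_mk', LinearMap.mem_ker]
      exact hker y hy x hx
    calc (affineSpan ℝ P).direction
        ≤ (AffineSubspace.mk' x (LinearMap.ker (flowLin s t))).direction :=
          AffineSubspace.direction_le hle
      _ = LinearMap.ker (flowLin s t) := AffineSubspace.direction_mk' _ _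
  · intro d hd
    rw [LinearMap.mem_ker] at hd
    have hδ : ∃ δ : ℝ, 0 < δ ∧ ∀ a, 0 ≤ x a + δ * d a := by
      rcases isEmpty_or_nonempty A with hA | hA
      · exact ⟨1, one_pos, fun a => isEmptyElim a⟩
      · set g : A → ℝ := fun a => x a / (|d a| + 1) with hg
        have hgpos : ∀ a, 0 < g a := fun a => by
          have : (0:ℝ) < |d a| + 1 := by positivity
          exact div_pos (hxpos a) this
        set δ : ℝ := Finset.univ.inf' Finset.univ_nonempty g with hδdef
        have hδpos : 0 < δ := by
          rw [hδdef, Finset.lt_inf'_iff]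
          exact fun a _ => hgpos a
        refine ⟨δ, hδpos, fun a => ?_⟩
        have hle : δ ≤ g a := Finset.inf'_le g (Finset.mem_univ a)
        have habs : (0:ℝ) < |d a| + 1 := by positivity
        rw [hg, le_div_iff₀ habs] at hle
        have h1 : δ * |d a| + δ ≤ x a := by nlinarith
        have h2 : -(δ * |d a|) ≤ δ * d a := by
          have := neg_abs_le (d a)
          nlinarith
        linarith
    obtain ⟨δ, hδpos, hδ⟩ := hδ
    have hmem : x + δ • d ∈ P := by
      refine ⟨fun a => ?_, fun v => ?_⟩
      · have := hδ a
        simpa using this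
      · rw [flowMap_eq_flowLin, map_add, map_smul, hd]
        have : flowLin s t x v = (θ v : ℝ) := hx.2 v
        simp [this]
    have hv : (x + δ • d) -ᵥ x ∈ (affineSpan ℝ P).direction :=
      AffineSubspace.vsub_mem_direction (subset_affineSpan ℝ P hmem)
        (subset_affineSpan ℝ P hx)
    have : d = δ⁻¹ • ((x + δ • d) -ᵥ x) := by
      rw [vsub_eq_sub]
      rw [add_sub_cancel_left, smul_smul, inv_mul_cancel₀ (ne_of_gt hδpos), one_smul]
    rw [this]
    exact Submodule.smul_mem _ _ hv
end Main

/-- if `(Q,θ)` is tight then `dim ∇(Q,θ) = χ(Q) = |Q1| - |Q0| + c(Q)`,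
stated additively to avoid truncated subtraction. -/
theorem stmt5 {V A : Type} [Fintype V] [Fintype A] [DecidableEq V] [DecidableEq A]
    (s t : A → V) (θ : V → ℤ) (htight : Tight s t θ) :
    Module.finrank ℝ (affineSpan ℝ (quiverPolyhedron s t θ)).direction + Fintype.card V
      = Fintype.card A + Nat.card (underlyingGraph s t).ConnectedComponent := by
  have hpos : ∀ a : A, ∃ x ∈ quiverPolyhedron s t θ, 0 < x a := by
    intro a
    by_contra h
    push_neg at h
    exact htight.2.1 a (removable_of_zero s t θ a
      (fun x hx => le_antisymm (not_lt.mp (by simpa using h x hx)) (hx.1 a)))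
  obtain ⟨x, hx, hxpos⟩ := exists_interior_point s t θ htight.1 hpos
  rw [direction_eq_ker s t θ x hx hxpos]
  exact finrank_ker_flowLin s t
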